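/- Let Φ = (Φ₁,…,Φₙ) be an n-tuple of polynomials in ℤ[x₁,…,xₙ] and let p be a prime large enough that the conclusion of the generator-reduction theorem holds (the reductions mod p of generators of I(V(ℤ)) generate I(V(𝔽_p))). Let q = p^k, let ℤ_q be the ring of integers of the unramified extension of ℚ_p with residue field 𝔽_q, and let π_p : ℤ_q[x₁,…,xₙ] → 𝔽_q[x₁,…,xₙ] be reduction modulo p. Let I(V(ℤ_q)) and I(V(𝔽_q)) be the kernels of (Φ*)ⁿ over ℤ_q and 𝔽_q respectively. Then I(V(𝔽_q)) = π_p(I(V(ℤ_q))). -/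

import Mathlib

open MvPolynomial

noncomputable section

/-- The substitution endomorphism `Φ* : f ↦ f ∘ Φ` of the polynomial ring `R[x₁,…,xₙ]`
induced by an `n`-tuple `Φ` of polynomials. -/
def substEnd (R : Type*) [CommRing R] {n : ℕ} (Φ : Fin n → MvPolynomial (Fin n) R) :
    MvPolynomial (Fin n) R →ₐ[R] MvPolynomial (Fin n) R :=
  MvPolynomial.aeval Φ

/-- The ideal `I(V(R))`: the kernel of the `n`-th power `(Φ*)ⁿ` of the substitution
endomorphism, i.e. the set of `f` with `f(Φⁿ) = 0`. -/
def iterKer (R : Type*) [CommRing R] {n : ℕ} (Φ : Fin n → MvPolynomial (Fin n) R) :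
    Ideal (MvPolynomial (Fin n) R) :=
  RingHom.ker (substEnd R Φ ^ n)

/-- `ℤ_q`: the ring of integers of the unramified extension of `ℚ_p` with residue field
`𝔽_q`, `q = p^k`, realized as the ring of Witt vectors of `𝔽_q`. -/
abbrev Zq (p k : ℕ) [Fact p.Prime] : Type _ := WittVector p (GaloisField p k)

/-! ### Auxiliary lemmas -/

/-- `substEnd` commutes, through `MvPolynomial.map`, with coefficient ring change. -/
theorem substEnd_map {R S : Type*} [CommRing R] [CommRing S] (h : R →+* S) {n : ℕ}
    (Φ : Fin n → MvPolynomial (Fin n) R) (f : MvPolynomial (Fin n) R) :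
    MvPolynomial.map h (substEnd R Φ f) =
      substEnd S (fun i => MvPolynomial.map h (Φ i)) (MvPolynomial.map h f) := by
  have key : (MvPolynomial.map h).comp (substEnd R Φ).toRingHom =
      (substEnd S (fun i => MvPolynomial.map h (Φ i))).toRingHom.comp
        (MvPolynomial.map h) := by
    apply MvPolynomial.ringHom_ext
    · intro r
      simp [substEnd]
    · intro i
      simp [substEnd]
  exact RingHom.congr_fun key f

/-- Iterated form of `substEnd_map`. -/
theorem substEnd_pow_map {R S : Type*} [CommRing R] [CommRing S] (h : R →+* S) {n : ℕ}
    (Φ : Fin n → MvPolynomial (Fin n) R) (m : ℕ) (f : MvPolynomial (Fin n) R) :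
    MvPolynomial.map h ((substEnd R Φ ^ m) f) =
      (substEnd S (fun i => MvPolynomial.map h (Φ i)) ^ m) (MvPolynomial.map h f) := by
  induction m generalizing f with
  | zero => simp
  | succ m ih =>
      rw [pow_succ, pow_succ, AlgHom.mul_apply, AlgHom.mul_apply,
        ih (substEnd R Φ f), substEnd_map h Φ f]

/-- Easy direction: the image of `I(V(R))` under coefficient reduction lands in `I(V(S))`. -/
theorem map_iterKer_le {R S : Type*} [CommRing R] [CommRing S] (h : R →+* S) {n : ℕ}
    (Φ : Fin n → MvPolynomial (Fin n) R) :
    Ideal.map (MvPolynomial.map h) (iterKer R Φ) ≤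
      iterKer S (fun i => MvPolynomial.map h (Φ i)) := by
  rw [Ideal.map_le_iff_le_comap]
  intro f hf
  have hf0 : (substEnd R Φ ^ n) f = 0 := hf
  simp only [Ideal.mem_comap, iterKer, RingHom.mem_ker]
  rw [← substEnd_pow_map h Φ n f, hf0, map_zero]

/-- Every polynomial over a field extension `L` of `K` decomposes as a finite combination
`∑ⱼ C(bⱼ) · map ι (gⱼ)` where `b` is a `K`-basis of `L` and the `gⱼ` have coefficients in `K`. -/
theorem exists_decomp {σ η K L : Type*} [Field K] [Field L] [Algebra K L]
    (b : Module.Basis η K L) (f : MvPolynomial σ L) :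
    ∃ g : η →₀ MvPolynomial σ K,
      f = g.sum fun j gj => C (b j) * MvPolynomial.map (algebraMap K L) gj := by
  induction f using MvPolynomial.induction_on' with
  | monomial m a =>
      refine ⟨Finsupp.mapRange (fun c => monomial m c) (by simp) (b.repr a), ?_⟩
      rw [Finsupp.sum_mapRange_index (by simp)]
      have h1 : ((b.repr a).sum fun j c =>
          C (b j) * MvPolynomial.map (algebraMap K L) ((monomial m) c)) =
          (b.repr a).sum fun j c => (monomial m : L →ₗ[L] _) (c • b j) := by
        apply Finsupp.sum_congr
        intro j _
        rw [MvPolynomial.map_monomial, C_mul_monomial, Algebra.smul_def, mul_comm]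
      have h2 := b.linearCombination_repr a
      rw [Finsupp.linearCombination_apply] at h2
      rw [h1, ← map_finsuppSum (monomial m : L →ₗ[L] MvPolynomial σ L), h2]
  | add f1 f2 ih1 ih2 =>
      obtain ⟨g1, hg1⟩ := ih1
      obtain ⟨g2, hg2⟩ := ih2
      refine ⟨g1 + g2, ?_⟩
      rw [Finsupp.sum_add_index' (by simp) (by intro a b1 b2; rw [map_add, mul_add]),
        ← hg1, ← hg2]

/-- Key lemma (flat descent for a field extension, done by hand): if an `L`-algebra
endomorphism `ψL` of `L[x]` restricts, through the coefficient embedding, to `ψK` on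
`K[x]`, then `ker ψL` is contained in the extension of `ker ψK`. -/
theorem ker_le_map_ker {σ K L : Type*} [Field K] [Field L] [Algebra K L]
    (ψK : MvPolynomial σ K →+* MvPolynomial σ K)
    (ψL : MvPolynomial σ L →ₐ[L] MvPolynomial σ L)
    (compat : ∀ f, ψL (MvPolynomial.map (algebraMap K L) f) =
      MvPolynomial.map (algebraMap K L) (ψK f)) :
    RingHom.ker (ψL : MvPolynomial σ L →+* MvPolynomial σ L) ≤
      Ideal.map (MvPolynomial.map (algebraMap K L)) (RingHom.ker ψK) := by
  intro f hf
  have hf0 : ψL f = 0 := hf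
  obtain ⟨g, hg⟩ := exists_decomp (Module.Basis.ofVectorSpace K L) f
  set b := Module.Basis.ofVectorSpace K L
  -- apply ψL to the decomposition
  have hψ : ∑ j ∈ g.support,
      C (b j) * MvPolynomial.map (algebraMap K L) (ψK (g j)) = 0 := by
    have : ψL f = g.sum fun j gj =>
        C (b j) * MvPolynomial.map (algebraMap K L) (ψK gj) := by
      rw [hg, map_finsuppSum ψL]
      apply Finsupp.sum_congr
      intro j _
      have hC : ψL (C (b j)) = C (b j) := by
        have := ψL.commutes (b j)
        rwa [MvPolynomial.algebraMap_eq] at this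
      rw [map_mul, hC, compat]
    rw [hf0] at this
    exact this.symm
  -- each ψK gj vanishes, by linear independence of the basis
  have hker : ∀ j ∈ g.support, ψK (g j) = 0 := by
    intro j hj
    apply MvPolynomial.ext
    intro m
    have hm := congrArg (MvPolynomial.coeff m) hψ
    rw [MvPolynomial.coeff_sum, MvPolynomial.coeff_zero] at hm
    have hm' : ∑ i ∈ g.support, (MvPolynomial.coeff m (ψK (g i))) • b i = 0 := by
      rw [← hm]
      apply Finset.sum_congr rfl
      intro i _
      rw [MvPolynomial.coeff_C_mul, MvPolynomial.coeff_map, Algebra.smul_def]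
      exact mul_comm _ _
    have := linearIndependent_iff'.mp b.linearIndependent g.support
      (fun i => MvPolynomial.coeff m (ψK (g i))) hm' j hj
    simpa using this
  -- conclude
  rw [hg]
  apply Ideal.sum_mem
  intro j hj
  exact Ideal.mul_mem_left _ _
    (Ideal.mem_map_of_mem _ (RingHom.mem_ker.mpr (hker j hj)))

/-- Let `Φ` be an `n`-tuple of integer polynomials and let `p` be a prime large enough that
the reduction mod `p` of `I(V(ℤ))` generates `I(V(𝔽_p))`. Let `q = p^k`, let `ℤ_q` be the
ring of integers of the unramified extension of `ℚ_p` with residue field `𝔽_q`, and let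
`π_p : ℤ_q[x₁,…,xₙ] → 𝔽_q[x₁,…,xₙ]` be reduction mod `p` (induced by the residue map, i.e.
the surjection `ℤ_q → 𝔽_q` with kernel `(p)`). Then `I(V(𝔽_q)) = π_p(I(V(ℤ_q)))`. -/
theorem iterKer_Fq_eq_reduction_iterKer_Zq (n : ℕ) (Φ : Fin n → MvPolynomial (Fin n) ℤ)
    (p : ℕ) [Fact p.Prime]
    (hp : Ideal.map (MvPolynomial.map (Int.castRingHom (ZMod p))) (iterKer ℤ Φ) =
      iterKer (ZMod p) (fun i => MvPolynomial.map (Int.castRingHom (ZMod p)) (Φ i)))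
    (k : ℕ) (hk : 1 ≤ k)
    (π : Zq p k →+* GaloisField p k) (hπ : Function.Surjective π)
    (hker : RingHom.ker π = Ideal.span {(p : Zq p k)}) :
    iterKer (GaloisField p k)
        (fun i => MvPolynomial.map (Int.castRingHom (GaloisField p k)) (Φ i)) =
      Ideal.map (MvPolynomial.map π)
        (iterKer (Zq p k) (fun i => MvPolynomial.map (Int.castRingHom (Zq p k)) (Φ i))) := by
  set K := ZMod p
  set L := GaloisField p k
  set ι₁ : ℤ →+* K := Int.castRingHom K with hι₁
  set ι₂ : K →+* L := algebraMap K L with hι₂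
  set ι₃ : ℤ →+* Zq p k := Int.castRingHom (Zq p k) with hι₃
  have hcomm : ι₂.comp ι₁ = π.comp ι₃ := RingHom.ext_int _ _
  have hZL : ι₂.comp ι₁ = Int.castRingHom L := RingHom.ext_int _ _
  have hΦL : (fun i => MvPolynomial.map (Int.castRingHom L) (Φ i)) =
      fun i => MvPolynomial.map ι₂ (MvPolynomial.map ι₁ (Φ i)) := by
    funext i; rw [MvPolynomial.map_map, hZL]
  have hΦLπ : (fun i => MvPolynomial.map (Int.castRingHom L) (Φ i)) =
      fun i => MvPolynomial.map π (MvPolynomial.map ι₃ (Φ i)) := by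
    funext i; rw [MvPolynomial.map_map, ← hcomm, hZL]
  apply le_antisymm
  · -- hard direction
    have step1 : iterKer L (fun i => MvPolynomial.map (Int.castRingHom L) (Φ i)) ≤
        Ideal.map (MvPolynomial.map ι₂)
          (iterKer K (fun i => MvPolynomial.map ι₁ (Φ i))) := by
      rw [hΦL]
      apply ker_le_map_ker
        ((substEnd K (fun i => MvPolynomial.map ι₁ (Φ i)) ^ n :
          MvPolynomial (Fin n) K →ₐ[K] _) : MvPolynomial (Fin n) K →+* _)
        (substEnd L (fun i => MvPolynomial.map ι₂ (MvPolynomial.map ι₁ (Φ i))) ^ n)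
      intro f
      exact (substEnd_pow_map ι₂ (fun i => MvPolynomial.map ι₁ (Φ i)) n f).symm
    calc iterKer L (fun i => MvPolynomial.map (Int.castRingHom L) (Φ i))
        ≤ Ideal.map (MvPolynomial.map ι₂)
            (iterKer K (fun i => MvPolynomial.map ι₁ (Φ i))) := step1
      _ = Ideal.map (MvPolynomial.map ι₂)
            (Ideal.map (MvPolynomial.map ι₁) (iterKer ℤ Φ)) := by rw [hp]
      _ = Ideal.map ((MvPolynomial.map ι₂).comp (MvPolynomial.map ι₁)) (iterKer ℤ Φ) :=
            Ideal.map_map _ _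
      _ = Ideal.map ((MvPolynomial.map π).comp (MvPolynomial.map ι₃)) (iterKer ℤ Φ) := by
            congr 1
            apply RingHom.ext
            intro f
            simp only [RingHom.comp_apply]
            rw [MvPolynomial.map_map, MvPolynomial.map_map, hcomm]
      _ = Ideal.map (MvPolynomial.map π)
            (Ideal.map (MvPolynomial.map ι₃) (iterKer ℤ Φ)) := (Ideal.map_map _ _).symm
      _ ≤ Ideal.map (MvPolynomial.map π)
            (iterKer (Zq p k) (fun i => MvPolynomial.map ι₃ (Φ i))) :=
            Ideal.map_mono (map_iterKer_le ι₃ Φ)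
  · -- easy direction
    rw [hΦLπ]
    exact map_iterKer_le π (fun i => MvPolynomial.map ι₃ (Φ i))

end
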